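/- arXiv:2408.04544 — 3 statements merged into one kernel-verified Lean document; each statement's English description precedes it below -/
import Mathlib

section
/- Let (X, d, μ) be a space of homogeneous type and let p : X → [1, ∞) be a measurable exponent with 1 ≤ p₋ ≤ p₊ < ∞ that is globally log-Hölder continuous. Then sup over all balls B ⊆ X of μ(B)^{p₋(B) − p₊(B)} is finite, with bound depending only on p(·) and the space. -/
noncomputable section
open MeasureTheory ENNReal Set

/-- quasi-metric ball -/
def qball {X : Type*} (d : X → X → ℝ) (x : X) (r : ℝ) : Set X := {y | d x y < r}

/-- supremum of an exponent function over a set -/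
def expSup {X : Type*} (p : X → ℝ) (B : Set X) : ℝ := sSup (p '' B)

/-- infimum of an exponent function over a set -/
def expInf {X : Type*} (p : X → ℝ) (B : Set X) : ℝ := sInf (p '' B)

set_option maxHeartbeats 2000000

/-- Diening-type condition: if `p(·)` is globally log-Hölder continuous with
`1 ≤ p₋ ≤ p₊ < ∞` on a space of homogeneous type, then
`sup_B μ(B)^{p₋(B) − p₊(B)} < ∞`. -/
theorem diening_condition {X : Type*} [MeasurableSpace X]
    (d : X → X → ℝ) (μ : Measure X) (A₀ Cμ : ℝ) (hA₀ : 1 ≤ A₀) (hCμ : 1 ≤ Cμ)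
    (hd_self : ∀ x, d x x = 0)
    (hd_symm : ∀ x y, d x y = d y x)
    (hd_tri : ∀ x y z, d x y ≤ A₀ * (d x z + d z y))
    (h_pos : ∀ x r, 0 < r → 0 < μ (qball d x r))
    (h_fin : ∀ x r, 0 < r → μ (qball d x r) < ⊤)
    (h_doubling : ∀ x r, 0 < r →
      μ (qball d x (2 * r)) ≤ ENNReal.ofReal Cμ * μ (qball d x r))
    (p : X → ℝ) (P : ℝ)
    (hp_lo : ∀ x, 1 ≤ p x) (hp_hi : ∀ x, p x ≤ P)
    -- local log-Hölder continuity
    (CL : ℝ) (hCL : 0 < CL)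
    (hLH0 : ∀ x y, 0 < d x y → d x y < 1 / 2 →
      |p x - p y| ≤ CL / Real.log (Real.exp 1 + 1 / d x y))
    -- log-Hölder continuity at infinity with respect to a base point x₀
    (x₀ : X) (pinfty Cinf : ℝ) (hCinf : 0 < Cinf)
    (hLHinf : ∀ x, |p x - pinfty| ≤ Cinf / Real.log (Real.exp 1 + d x₀ x)) :
    ∃ C : ℝ, 0 < C ∧ ∀ x r, 0 < r →
      ((μ (qball d x r)).toReal) ^ (expInf p (qball d x r) - expSup p (qball d x r)) ≤ C := by
  -- ====== basic metric facts ======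
  have hA₀pos : (0:ℝ) < A₀ := lt_of_lt_of_le one_pos hA₀
  have hd_nonneg : ∀ x y, 0 ≤ d x y := by
    intro x y
    have h := hd_tri x x y
    rw [hd_self, hd_symm y x] at h
    nlinarith
  have hx_mem : ∀ x r, 0 < r → x ∈ qball d x r := by
    intro x r hr; show d x x < r; rw [hd_self]; exact hr
  have hball_mono : ∀ (x:X) (r r' : ℝ), r ≤ r' → qball d x r ⊆ qball d x r' := by
    intro x r r' h u hu; exact lt_of_lt_of_le hu h
  have hne : ∀ x r, 0 < r → (qball d x r).Nonempty := fun x r hr => ⟨x, hx_mem x r hr⟩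
  -- ====== sSup/sInf facts ======
  have hbdda : ∀ S : Set X, BddAbove (p '' S) := by
    intro S; exact ⟨P, by rintro a ⟨y, _, rfl⟩; exact hp_hi y⟩
  have hbddb : ∀ S : Set X, BddBelow (p '' S) := by
    intro S; exact ⟨1, by rintro a ⟨y, _, rfl⟩; exact hp_lo y⟩
  have hinf_le_sup : ∀ S : Set X, S.Nonempty → expInf p S ≤ expSup p S := by
    intro S hS; exact csInf_le_csSup (hS.image p) (hbddb S) (hbdda S)
  have hinf_ge : ∀ S : Set X, S.Nonempty → 1 ≤ expInf p S := by
    intro S hS; exact le_csInf (hS.image p) (by rintro a ⟨y, _, rfl⟩; exact hp_lo y)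
  have hsup_le : ∀ S : Set X, S.Nonempty → expSup p S ≤ P := by
    intro S hS; exact csSup_le (hS.image p) (by rintro a ⟨y, _, rfl⟩; exact hp_hi y)
  have hpair : ∀ (S : Set X), S.Nonempty → ∀ β, (∀ y ∈ S, ∀ z ∈ S, p y - p z ≤ β) →
      expSup p S - expInf p S ≤ β := by
    intro S hS β hβ
    rw [sub_le_iff_le_add]
    apply csSup_le (hS.image p)
    rintro a ⟨y, hy, rfl⟩
    rw [add_comm, ← sub_le_iff_le_add]
    apply le_csInf (hS.image p)
    rintro b ⟨z, hz, rfl⟩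
    linarith [hβ y hy z hz]
  have hosc_mono : ∀ (S T : Set X), S.Nonempty → S ⊆ T →
      expSup p S - expInf p S ≤ expSup p T - expInf p T := by
    intro S T hS hST
    have h1 : expSup p S ≤ expSup p T :=
      csSup_le_csSup (hbdda T) (hS.image p) (Set.image_mono hST)
    have h2 : expInf p T ≤ expInf p S :=
      csInf_le_csInf (hbddb T) (hS.image p) (Set.image_mono hST)
    linarith
  -- ====== constants ======
  set r₁ : ℝ := 1 / (32 * A₀^4) with hr₁def
  have hr₁pos : 0 < r₁ := by positivity
  have hA₀2 : (1:ℝ) ≤ A₀^2 := by nlinarith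
  have hA₀4 : (1:ℝ) ≤ A₀^4 := by nlinarith
  have hr₁le : r₁ ≤ 1/32 := by
    rw [hr₁def]
    apply div_le_div_of_nonneg_left (by norm_num) (by norm_num) (by nlinarith)
  set m₀ : ℝ := (μ (qball d x₀ 1)).toReal with hm₀def
  have hm₀pos : 0 < m₀ :=
    ENNReal.toReal_pos (h_pos x₀ 1 one_pos).ne' (h_fin x₀ 1 one_pos).ne
  set Λ : ℝ := Real.log Cμ with hΛdef
  have hΛ : 0 ≤ Λ := Real.log_nonneg hCμ
  have hlog2 : (0:ℝ) < Real.log 2 := Real.log_pos (by norm_num)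
  have hlogA₀ : 0 ≤ Real.log A₀ := Real.log_nonneg hA₀
  set c₁ : ℝ := |Real.log m₀| + Λ + (Λ / Real.log 2) * (Real.log A₀ + 1) + 1 with hc₁def
  have hc₁ : 1 ≤ c₁ := by
    have h1 : 0 ≤ |Real.log m₀| := abs_nonneg _
    have h2 : 0 ≤ (Λ / Real.log 2) := by positivity
    rw [hc₁def]
    nlinarith [mul_nonneg h2 (by linarith : (0:ℝ) ≤ Real.log A₀ + 1)]
  set Q : ℝ := P - 1 with hQdef
  have hQ : 0 ≤ Q := by have := hp_lo x₀; have := hp_hi x₀; simp only [hQdef]; linarith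
  -- pow helper
  have pow_ge : ∀ q : ℝ, 0 < q → q ≤ (2:ℝ) ^ (⌈Real.logb 2 q⌉₊ : ℕ) := by
    intro q hq
    have h1 : (2:ℝ) ^ Real.logb 2 q = q := Real.rpow_logb two_pos (by norm_num) hq
    calc q = (2:ℝ) ^ Real.logb 2 q := h1.symm
      _ ≤ (2:ℝ) ^ ((⌈Real.logb 2 q⌉₊ : ℕ) : ℝ) :=
          Real.rpow_le_rpow_of_exponent_le (by norm_num) (Nat.le_ceil _)
      _ = (2:ℝ) ^ (⌈Real.logb 2 q⌉₊ : ℕ) := Real.rpow_natCast 2 _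
  have ceil_le : ∀ a : ℝ, ((⌈a⌉₊ : ℕ) : ℝ) ≤ max a 0 + 1 := by
    intro a
    rcases le_or_gt 0 a with h | h
    · have := Nat.ceil_lt_add_one h
      have : ((⌈a⌉₊ : ℕ) : ℝ) < a + 1 := this
      have ha : a ≤ max a 0 := le_max_left _ _
      linarith
    · rw [Nat.ceil_eq_zero.mpr h.le]
      simp
      linarith [le_max_right a 0]
  -- doubling iteration
  have doub_iter : ∀ (x : X) (r : ℝ) (n : ℕ), 0 < r →
      μ (qball d x (2^n * r)) ≤ (ENNReal.ofReal Cμ)^n * μ (qball d x r) := by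
    intro x r n hr
    induction n with
    | zero => simp
    | succ n ih =>
      have h1 : (2:ℝ)^(n+1) * r = 2 * (2^n * r) := by ring
      rw [h1, pow_succ]
      calc μ (qball d x (2 * (2^n * r))) ≤ ENNReal.ofReal Cμ * μ (qball d x (2^n * r)) :=
            h_doubling x (2^n * r) (by positivity)
        _ ≤ ENNReal.ofReal Cμ * ((ENNReal.ofReal Cμ)^n * μ (qball d x r)) :=
            mul_le_mul_right ih _
        _ = (ENNReal.ofReal Cμ)^n * ENNReal.ofReal Cμ * μ (qball d x r) := by ring
  -- chain core: lower bound for measure of a ball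
  have chain_core : ∀ (x : X) (r : ℝ) (n : ℕ), 0 < r →
      A₀ * (d x₀ x + 1) ≤ 2^n * r →
      Real.log m₀ ≤ n * Λ + Real.log ((μ (qball d x r)).toReal) := by
    intro x r n hr hn
    have hsub : qball d x₀ 1 ⊆ qball d x (2^n * r) := by
      intro u hu
      have hu' : d x₀ u < 1 := hu
      have h1 : d x u ≤ A₀ * (d x x₀ + d x₀ u) := hd_tri x u x₀
      rw [hd_symm x x₀] at h1
      have : d x u < A₀ * (d x₀ x + 1) := by nlinarith [hd_nonneg x₀ x]
      exact lt_of_lt_of_le this hn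
    have h2 : μ (qball d x₀ 1) ≤ (ENNReal.ofReal Cμ)^n * μ (qball d x r) :=
      le_trans (measure_mono hsub) (doub_iter x r n hr)
    have hfin2 : (ENNReal.ofReal Cμ)^n * μ (qball d x r) ≠ ⊤ :=
      ENNReal.mul_ne_top (ENNReal.pow_ne_top ENNReal.ofReal_ne_top) (h_fin x r hr).ne
    have h3 : m₀ ≤ ((ENNReal.ofReal Cμ)^n * μ (qball d x r)).toReal :=
      (ENNReal.toReal_le_toReal (h_fin x₀ 1 one_pos).ne hfin2).mpr h2
    have h4 : ((ENNReal.ofReal Cμ)^n * μ (qball d x r)).toReal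
        = Cμ^n * (μ (qball d x r)).toReal := by
      rw [ENNReal.toReal_mul, ENNReal.toReal_pow, ENNReal.toReal_ofReal (by linarith)]
    rw [h4] at h3
    have htpos : 0 < (μ (qball d x r)).toReal :=
      ENNReal.toReal_pos (h_pos x r hr).ne' (h_fin x r hr).ne
    have hCμpos : (0:ℝ) < Cμ := by linarith
    calc Real.log m₀ ≤ Real.log (Cμ^n * (μ (qball d x r)).toReal) :=
          Real.log_le_log hm₀pos h3
      _ = n * Λ + Real.log ((μ (qball d x r)).toReal) := by
          rw [Real.log_mul (by positivity) htpos.ne', Real.log_pow]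
  -- chain master bound
  have chm : ∀ (x : X) (R : ℝ), 0 < R →
      -Real.log ((μ (qball d x R)).toReal) ≤
        c₁ * (1 + Real.log (Real.exp 1 + d x₀ x) + max (Real.log (1/R)) 0) := by
    intro x R hR
    set m := d x₀ x with hm
    have hm0 : 0 ≤ m := hd_nonneg x₀ x
    set q : ℝ := A₀ * (m + 1) / R with hq
    have hqpos : 0 < q := by positivity
    set n : ℕ := ⌈Real.logb 2 q⌉₊ with hn
    have hq2 : A₀ * (m + 1) ≤ 2^n * R := by
      have h1 : q ≤ (2:ℝ)^n := pow_ge q hqpos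
      have h2 : q * R ≤ (2:ℝ)^n * R := mul_le_mul_of_nonneg_right h1 hR.le
      rwa [hq, div_mul_cancel₀ _ hR.ne'] at h2
    have hcc := chain_core x R n hR hq2
    have hceil : (n:ℝ) ≤ max (Real.logb 2 q) 0 + 1 := ceil_le _
    have hlogq : Real.log q = Real.log A₀ + Real.log (m+1) - Real.log R := by
      rw [hq, Real.log_div (by positivity) hR.ne', Real.log_mul hA₀pos.ne' (by positivity)]
    have hlogb : Real.logb 2 q = Real.log q / Real.log 2 := (Real.log_div_log).symm
    set ℓ : ℝ := max (Real.log (1/R)) 0 with hℓ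
    have hℓinv : Real.log (1/R) = -Real.log R := by rw [one_div, Real.log_inv]
    have hℓ0 : 0 ≤ ℓ := le_max_right _ _
    have hlm0 : 0 ≤ Real.log (m+1) := Real.log_nonneg (by linarith)
    have hmax : max (Real.logb 2 q) 0 ≤ (Real.log A₀ + Real.log (m+1) + ℓ) / Real.log 2 := by
      apply max_le
      · rw [hlogb, div_le_div_iff_of_pos_right hlog2, hlogq]
        have : -Real.log R ≤ ℓ := by rw [hℓ, ← hℓinv]; exact le_max_left _ _
        linarith
      · positivity
    have hlam1 : 1 ≤ Real.log (Real.exp 1 + m) := by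
      calc (1:ℝ) = Real.log (Real.exp 1) := (Real.log_exp 1).symm
        _ ≤ Real.log (Real.exp 1 + m) :=
            Real.log_le_log (Real.exp_pos 1) (by linarith)
    have hlamlm : Real.log (m+1) ≤ Real.log (Real.exp 1 + m) := by
      apply Real.log_le_log (by linarith)
      have := Real.add_one_le_exp (1:ℝ)
      linarith
    set lam : ℝ := Real.log (Real.exp 1 + m)
    -- combine
    have hstep : -Real.log ((μ (qball d x R)).toReal) ≤ (n:ℝ) * Λ - Real.log m₀ := by
      linarith
    have hnΛ : (n:ℝ) * Λ ≤ ((Real.log A₀ + Real.log (m+1) + ℓ) / Real.log 2 + 1) * Λ := by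
      apply mul_le_mul_of_nonneg_right _ hΛ
      calc (n:ℝ) ≤ max (Real.logb 2 q) 0 + 1 := hceil
        _ ≤ (Real.log A₀ + Real.log (m+1) + ℓ) / Real.log 2 + 1 := by linarith
    have habs : -Real.log m₀ ≤ |Real.log m₀| := neg_le_abs _
    have hd2 : 0 ≤ Λ / Real.log 2 := by positivity
    have hkey : ((Real.log A₀ + Real.log (m+1) + ℓ) / Real.log 2 + 1) * Λ
        = (Λ / Real.log 2) * Real.log A₀ + (Λ / Real.log 2) * Real.log (m+1)
          + (Λ / Real.log 2) * ℓ + Λ := by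
      field_simp
    have e1 : (Λ / Real.log 2) * Real.log (m+1) ≤ (Λ / Real.log 2) * lam :=
      mul_le_mul_of_nonneg_left hlamlm hd2
    have hprod : 0 ≤ (Λ / Real.log 2) * Real.log A₀ := mul_nonneg hd2 hlogA₀
    have hring : (Λ / Real.log 2) * (Real.log A₀ + 1)
        = (Λ / Real.log 2) * Real.log A₀ + Λ / Real.log 2 := by ring
    have t1 : Λ / Real.log 2 ≤ c₁ := by
      rw [hc₁def, hring]; linarith [abs_nonneg (Real.log m₀)]
    have t2 : (Λ / Real.log 2) * lam ≤ c₁ * lam :=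
      mul_le_mul_of_nonneg_right t1 (by linarith)
    have t3 : (Λ / Real.log 2) * ℓ ≤ c₁ * ℓ := mul_le_mul_of_nonneg_right t1 hℓ0
    have hc₁' : |Real.log m₀| + Λ + (Λ / Real.log 2) * Real.log A₀ ≤ c₁ := by
      rw [hc₁def, hring]; linarith
    have hexp : c₁ * (1 + lam + ℓ) = c₁ + c₁ * lam + c₁ * ℓ := by ring
    clear_value lam ℓ c₁ Λ m₀
    have s1 : -Real.log ((μ (qball d x R)).toReal) ≤ Λ / Real.log 2 * Real.log A₀
        + Λ / Real.log 2 * lam + Λ / Real.log 2 * ℓ + Λ + |Real.log m₀| := by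
      linarith [hstep, hnΛ, hkey, e1, habs]
    have s2 : -Real.log ((μ (qball d x R)).toReal) ≤ c₁ + c₁ * lam + c₁ * ℓ := by
      linarith [s1, hc₁', t2, t3, e1]
    linarith [s2, hexp]
  clear_value r₁ m₀ Λ c₁ Q
  -- oscillation bound at infinity
  have oinf : ∀ (x : X) (r : ℝ), 0 < r → 2*A₀*r ≤ d x₀ x →
      expSup p (qball d x r) - expInf p (qball d x r)
        ≤ 2*Cinf / Real.log (Real.exp 1 + d x₀ x / (2*A₀)) := by
    intro x r hr hfar
    set m := d x₀ x with hmm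
    have hm0 : 0 ≤ m := hd_nonneg x₀ x
    set L : ℝ := Real.log (Real.exp 1 + m / (2*A₀)) with hL
    have hL1 : 1 ≤ L := by
      rw [hL]
      calc (1:ℝ) = Real.log (Real.exp 1) := (Real.log_exp 1).symm
        _ ≤ Real.log (Real.exp 1 + m / (2*A₀)) :=
            Real.log_le_log (Real.exp_pos 1) (le_add_of_nonneg_right (by positivity))
    apply hpair _ (hne x r hr)
    intro y hy z hz
    have hbd : ∀ u : X, u ∈ qball d x r → Cinf / Real.log (Real.exp 1 + d x₀ u) ≤ Cinf / L := by
      intro u hu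
      have hxu : d x u < r := hu
      have htr : m ≤ A₀ * (d x₀ u + d u x) := hd_tri x₀ x u
      rw [hd_symm u x] at htr
      have hufar : m / (2*A₀) ≤ d x₀ u := by
        rw [div_le_iff₀ (by positivity)]
        have hp1 : A₀ * d x u ≤ A₀ * r := mul_le_mul_of_nonneg_left hxu.le hA₀pos.le
        linarith [htr, hfar, hp1]
      have hLu : L ≤ Real.log (Real.exp 1 + d x₀ u) := by
        rw [hL]
        exact Real.log_le_log (by positivity) (by linarith)
      exact div_le_div_of_nonneg_left hCinf.le (by linarith) hLu
    have h1 := abs_le.mp (hLHinf y)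
    have h2 := abs_le.mp (hLHinf z)
    have b1 := hbd y hy
    have b2 := hbd z hz
    have hsum : 2*Cinf/L = Cinf/L + Cinf/L := by ring
    linarith [h1.1, h1.2, h2.1, h2.2, hsum]
  -- local dichotomy
  have dich : ∀ (x : X) (r : ℝ), 0 < r → r ≤ r₁ →
      (expSup p (qball d x r) - expInf p (qball d x r)
          ≤ 2*CL / Real.log (Real.exp 1 + 1/(5*A₀^2*r)))
      ∨ qball d x r = qball d x (4*r) := by
    intro x r hr hrr₁
    have h32 : 32 * A₀^4 * r ≤ 1 := by
      have h' : r ≤ 1 / (32 * A₀^4) := by rw [← hr₁def]; exact hrr₁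
      rw [le_div_iff₀ (by positivity)] at h'
      linarith
    set ρ : ℝ := 5*A₀^2*r with hρ
    have hρpos : 0 < ρ := by positivity
    have hρhalf : ρ < 1/2 := by nlinarith
    set LR : ℝ := Real.log (Real.exp 1 + 1/ρ) with hLR
    have hLR1 : 1 ≤ LR := by
      rw [hLR]
      calc (1:ℝ) = Real.log (Real.exp 1) := (Real.log_exp 1).symm
        _ ≤ _ := Real.log_le_log (Real.exp_pos 1) (le_add_of_nonneg_right (by positivity))
    have hb : ∀ s : ℝ, 0 < s → s ≤ ρ →
        CL / Real.log (Real.exp 1 + 1/s) ≤ CL / LR := by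
      intro s hs hsρ
      have h1 : 1/ρ ≤ 1/s := one_div_le_one_div_of_le hs hsρ
      have h2 : LR ≤ Real.log (Real.exp 1 + 1/s) := by
        rw [hLR]; exact Real.log_le_log (by positivity) (by linarith)
      exact div_le_div_of_nonneg_left hCL.le (by linarith) h2
    by_cases hw : ∃ w, 0 < d x w ∧ d x w < 5*A₀*r
    · left
      apply hpair _ (hne x r hr)
      intro y hy z hz
      obtain ⟨w, hw1, hw2⟩ := hw
      have hxy : d x y < r := hy
      have hxz : d x z < r := hz
      have habs : |p y - p z| ≤ 2*CL/LR := by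
        rcases (hd_nonneg y z).lt_or_eq with hyz | hyz
        · -- d y z > 0 : direct local estimate
          have hdyz : d y z ≤ A₀ * (d y x + d x z) := hd_tri y z x
          rw [hd_symm y x] at hdyz
          have hsmall : d y z < 2*A₀*r := by nlinarith
          have hhalf : d y z < 1/2 := by nlinarith
          have := hLH0 y z hyz hhalf
          have hle : CL / Real.log (Real.exp 1 + 1/(d y z)) ≤ CL / LR :=
            hb (d y z) hyz (by nlinarith)
          have hpos' : 0 ≤ CL / LR := by positivity
          calc |p y - p z| ≤ CL / Real.log (Real.exp 1 + 1/(d y z)) := this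
            _ ≤ CL / LR := hle
            _ ≤ 2*CL/LR := by rw [div_le_div_iff₀ (by linarith) (by linarith)]; nlinarith
        · -- d y z = 0
          rcases (hd_nonneg x y).lt_or_eq with hxy0 | hxy0
          · -- d x y > 0 : go through the center x
            have hxz0 : 0 < d x z := by
              have h1 : d x y ≤ A₀ * (d x z + d z y) := hd_tri x y z
              rw [hd_symm z y, ← hyz] at h1
              nlinarith
            have hxzlt : d x z ≤ A₀ * (d x y + d y z) := hd_tri x z y
            rw [← hyz] at hxzlt
            have hxzρ : d x z < ρ := by nlinarith
            have e1 := hLH0 x y hxy0 (by nlinarith)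
            have e2 := hLH0 x z hxz0 (by nlinarith)
            have f1 : CL / Real.log (Real.exp 1 + 1/(d x y)) ≤ CL / LR :=
              hb (d x y) hxy0 (by nlinarith)
            have f2 : CL / Real.log (Real.exp 1 + 1/(d x z)) ≤ CL / LR :=
              hb (d x z) hxz0 hxzρ.le
            calc |p y - p z| ≤ |p y - p x| + |p x - p z| := abs_sub_le _ _ _
              _ = |p x - p y| + |p x - p z| := by rw [abs_sub_comm]
              _ ≤ 2*CL/LR := by
                  have hsum : CL/LR + CL/LR = 2*CL/LR := by ring
                  linarith [e1.trans f1, e2.trans f2, hsum]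
          · -- d x y = 0, use the witness w
            have hxz0 : d x z = 0 := by
              have h1 : d x z ≤ A₀ * (d x y + d y z) := hd_tri x z y
              rw [← hxy0, ← hyz] at h1
              have := hd_nonneg x z
              linarith [h1]
            have hyw_pos : 0 < d y w := by
              have h1 : d x w ≤ A₀ * (d x y + d y w) := hd_tri x w y
              rw [← hxy0] at h1
              nlinarith
            have hyw_lt : d y w < ρ := by
              have h1 : d y w ≤ A₀ * (d y x + d x w) := hd_tri y w x
              rw [hd_symm y x, ← hxy0] at h1
              nlinarith
            have hzw_pos : 0 < d z w := by
              have h1 : d x w ≤ A₀ * (d x z + d z w) := hd_tri x w z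
              rw [hxz0] at h1
              nlinarith
            have hzw_lt : d z w < ρ := by
              have h1 : d z w ≤ A₀ * (d z x + d x w) := hd_tri z w x
              rw [hd_symm z x, hxz0] at h1
              nlinarith
            have e1 := hLH0 y w hyw_pos (by nlinarith)
            have e2 := hLH0 z w hzw_pos (by nlinarith)
            have f1 : CL / Real.log (Real.exp 1 + 1/(d y w)) ≤ CL / LR :=
              hb (d y w) hyw_pos hyw_lt.le
            have f2 : CL / Real.log (Real.exp 1 + 1/(d z w)) ≤ CL / LR :=
              hb (d z w) hzw_pos hzw_lt.le
            calc |p y - p z| ≤ |p y - p w| + |p w - p z| := abs_sub_le _ _ _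
              _ = |p y - p w| + |p z - p w| := by rw [abs_sub_comm (p w) (p z)]
              _ ≤ 2*CL/LR := by
                  have hsum : CL/LR + CL/LR = 2*CL/LR := by ring
                  linarith [e1.trans f1, e2.trans f2, hsum]
      linarith [le_abs_self (p y - p z), habs]
    · right
      push_neg at hw
      apply Set.Subset.antisymm (hball_mono x r (4*r) (by linarith))
      intro u hu
      have hu' : d x u < 4*r := hu
      rcases (hd_nonneg x u).lt_or_eq with hpos' | heq
      · have := hw u hpos'
        have : (5*A₀*r : ℝ) ≤ d x u := this
        nlinarith
      · show d x u < r
        rw [← heq]; exact hr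
  -- radius inflation
  have infl : ∀ n : ℕ, ∀ (x : X) (r : ℝ), 0 < r → r ≤ r₁ → r₁ ≤ 4^n * r →
      ∃ R, r ≤ R ∧ 0 < R ∧ μ (qball d x r) = μ (qball d x R) ∧
        qball d x r ⊆ qball d x R ∧
        (r₁ < R ∨ expSup p (qball d x R) - expInf p (qball d x R)
            ≤ 2*CL / Real.log (Real.exp 1 + 1/(5*A₀^2*R))) := by
    intro n
    induction n with
    | zero =>
      intro x r hr hle hge
      rcases dich x r hr hle with hB | hEq
      · exact ⟨r, le_refl r, hr, rfl, subset_rfl, Or.inr hB⟩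
      · have hge' : r₁ ≤ r := by simpa using hge
        exact ⟨4*r, by linarith, by linarith, by rw [hEq],
          hball_mono x r (4*r) (by linarith), Or.inl (by linarith)⟩
    | succ n ih =>
      intro x r hr hle hge
      rcases dich x r hr hle with hB | hEq
      · exact ⟨r, le_refl r, hr, rfl, subset_rfl, Or.inr hB⟩
      · by_cases h4 : 4*r ≤ r₁
        · have hge' : r₁ ≤ 4^n * (4*r) := by
            calc r₁ ≤ 4^(n+1) * r := hge
              _ = 4^n * (4*r) := by ring
          obtain ⟨R, h1, h2, h3, h4', h5⟩ := ih x (4*r) (by linarith) h4 hge'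
          exact ⟨R, by linarith, h2, by rw [hEq]; exact h3,
            (hball_mono x r (4*r) (by linarith)).trans h4', h5⟩
        · exact ⟨4*r, by linarith, by linarith, by rw [hEq],
            hball_mono x r (4*r) (by linarith), Or.inl (by linarith)⟩
  -- constants for the final bound
  set N₀ : ℕ := ⌈Real.logb 2 (A₀*(2*A₀+1))⌉₊ with hN₀def
  have hN₀ : A₀*(2*A₀+1) ≤ 2^N₀ := by
    rw [hN₀def]; exact pow_ge (A₀*(2*A₀+1)) (by positivity)
  have hN₀0 : (0:ℝ) ≤ (N₀:ℝ) := Nat.cast_nonneg _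
  clear_value N₀
  have hlog2A₀ : 0 ≤ Real.log (2*A₀) := Real.log_nonneg (by linarith)
  have hlog5A₀ : 0 ≤ Real.log (5*A₀^2) := Real.log_nonneg (by linarith)
  have hloge2A₀ : 0 ≤ Real.log (Real.exp 1 + 2*A₀) := by
    apply Real.log_nonneg
    have := Real.exp_pos (1:ℝ)
    linarith
  have hlogr₁ : 0 ≤ Real.log (1/r₁) := by
    apply Real.log_nonneg
    rw [le_div_iff₀ hr₁pos, one_mul]; linarith
  have hc₁0 : 0 ≤ c₁ := by linarith
  set T₂ : ℝ := Q*Real.log (1/r₁) + 2*CL*(1+Real.log (5*A₀^2)) with hT₂def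
  have h2CL : 0 ≤ 2*CL*(1+Real.log (5*A₀^2)) := mul_nonneg (by linarith) (by linarith)
  have hT₂0 : 0 ≤ T₂ := by
    rw [hT₂def]
    linarith [mul_nonneg hQ hlogr₁]
  set M : ℝ := Q*((N₀:ℝ)*Λ + |Real.log m₀|)
      + c₁*(2*Cinf*(2+Real.log (2*A₀)) + Q*(1+Real.log (Real.exp 1+2*A₀)) + T₂) with hMdef
  have hM0 : 0 ≤ M := by
    rw [hMdef]
    have g1 : 0 ≤ (N₀:ℝ)*Λ + |Real.log m₀| :=
      add_nonneg (mul_nonneg hN₀0 hΛ) (abs_nonneg _)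
    have g2 : 0 ≤ 2*Cinf*(2+Real.log (2*A₀)) := mul_nonneg (by linarith) (by linarith)
    have g3 : 0 ≤ Q*(1+Real.log (Real.exp 1+2*A₀)) := mul_nonneg hQ (by linarith)
    have := mul_nonneg hQ g1
    have := mul_nonneg hc₁0 (by linarith : 0 ≤ 2*Cinf*(2+Real.log (2*A₀)) + Q*(1+Real.log (Real.exp 1+2*A₀)) + T₂)
    linarith
  clear_value T₂ M
  -- the core estimate for a single ball
  have est : ∀ (x : X) (R : ℝ), 0 < R →
      (r₁ < R ∨ expSup p (qball d x R) - expInf p (qball d x R)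
          ≤ 2*CL / Real.log (Real.exp 1 + 1/(5*A₀^2*R))) →
      (expSup p (qball d x R) - expInf p (qball d x R))
        * (-Real.log ((μ (qball d x R)).toReal)) ≤ M := by
    intro x R hR hdisj
    have hBne := hne x R hR
    set osc : ℝ := expSup p (qball d x R) - expInf p (qball d x R) with hoscdef
    have hosc0 : 0 ≤ osc := by
      have := hinf_le_sup _ hBne; rw [hoscdef]; linarith
    have hoscQ : osc ≤ Q := by
      have := hsup_le _ hBne; have := hinf_ge _ hBne; rw [hoscdef]; linarith
    set m := d x₀ x with hmdef
    have hm0 : 0 ≤ m := hd_nonneg x₀ x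
    set lam : ℝ := Real.log (Real.exp 1 + m) with hlamdef
    have hlam1 : 1 ≤ lam := by
      rw [hlamdef]
      calc (1:ℝ) = Real.log (Real.exp 1) := (Real.log_exp 1).symm
        _ ≤ _ := Real.log_le_log (Real.exp_pos 1) (by linarith)
    set ℓ : ℝ := max (Real.log (1/R)) 0 with hℓdef
    have hℓ0 : 0 ≤ ℓ := le_max_right _ _
    have hchm : -Real.log ((μ (qball d x R)).toReal) ≤ c₁ * (1 + lam + ℓ) := chm x R hR
    clear_value osc m lam ℓ
    -- bound for osc * ℓ
    have hT2 : osc * ℓ ≤ T₂ := by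
      rcases hdisj with hfar | hOl
      · have hRpos := hr₁pos.trans hfar
        have hℓle : ℓ ≤ Real.log (1/r₁) := by
          rw [hℓdef]
          apply max_le _ hlogr₁
          apply Real.log_le_log (by positivity)
          exact one_div_le_one_div_of_le hr₁pos hfar.le
        calc osc * ℓ ≤ Q * Real.log (1/r₁) :=
              mul_le_mul hoscQ hℓle hℓ0 hQ
          _ ≤ T₂ := by rw [hT₂def]; linarith
      · set LR : ℝ := Real.log (Real.exp 1 + 1/(5*A₀^2*R)) with hLRdef
        have hLR1 : 1 ≤ LR := by
          rw [hLRdef]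
          calc (1:ℝ) = Real.log (Real.exp 1) := (Real.log_exp 1).symm
            _ ≤ _ := Real.log_le_log (Real.exp_pos 1)
                (le_add_of_nonneg_right (by positivity))
        have hℓle : ℓ ≤ Real.log (5*A₀^2) + LR := by
          rw [hℓdef]
          apply max_le _ (by linarith)
          have hsplit : (1:ℝ)/R = (5*A₀^2) * (1/(5*A₀^2*R)) := by
            field_simp
          rw [hsplit, Real.log_mul (by positivity) (by positivity)]
          have : Real.log (1/(5*A₀^2*R)) ≤ LR := by
            rw [hLRdef]
            apply Real.log_le_log (by positivity)
            linarith [(Real.exp_pos (1:ℝ)).le]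
          linarith
        have hstep : osc * ℓ ≤ (2*CL/LR) * (Real.log (5*A₀^2) + LR) := by
          apply mul_le_mul hOl hℓle hℓ0 (by positivity)
        have hexp : (2*CL/LR) * (Real.log (5*A₀^2) + LR)
            = 2*CL*Real.log (5*A₀^2)/LR + 2*CL := by
          field_simp
        have hdiv : 2*CL*Real.log (5*A₀^2)/LR ≤ 2*CL*Real.log (5*A₀^2) :=
          div_le_self (by positivity) hLR1
        rw [hT₂def]
        have hQl := mul_nonneg hQ hlogr₁
        have hring2 : 2*CL*(1+Real.log (5*A₀^2)) = 2*CL*Real.log (5*A₀^2) + 2*CL := by ring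
        linarith [hstep, hexp, hdiv, hQl, hring2]
    -- main case analysis
    by_cases hfar : 2*A₀*R ≤ m
    · -- far regime : oscillation controlled by the decay at infinity
      have hOi : osc ≤ 2*Cinf / Real.log (Real.exp 1 + m / (2*A₀)) := by
        rw [hoscdef, hmdef]; rw [hmdef] at hfar; exact oinf x R hR hfar
      set L : ℝ := Real.log (Real.exp 1 + m / (2*A₀)) with hLdef
      have hL1 : 1 ≤ L := by
        rw [hLdef]
        calc (1:ℝ) = Real.log (Real.exp 1) := (Real.log_exp 1).symm
          _ ≤ _ := Real.log_le_log (Real.exp_pos 1)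
              (le_add_of_nonneg_right (by positivity))
      have hlamL : lam ≤ Real.log (2*A₀) + L := by
        rw [hlamdef]
        have h1 : Real.exp 1 + m ≤ (2*A₀) * (Real.exp 1 + m/(2*A₀)) := by
          have hme : (2*A₀) * (m/(2*A₀)) = m := by field_simp
          have hee : Real.exp 1 ≤ 2*A₀*Real.exp 1 :=
            le_mul_of_one_le_left (Real.exp_pos 1).le (by linarith)
          calc Real.exp 1 + m ≤ 2*A₀*Real.exp 1 + (2*A₀)*(m/(2*A₀)) := by
                rw [hme]; linarith
            _ = (2*A₀) * (Real.exp 1 + m/(2*A₀)) := by ring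
        calc Real.log (Real.exp 1 + m) ≤ Real.log ((2*A₀) * (Real.exp 1 + m/(2*A₀))) :=
              Real.log_le_log (by positivity) h1
          _ = Real.log (2*A₀) + L := by
              rw [Real.log_mul (by positivity) (by positivity), hLdef]
      have h1lam : osc * (1+lam) ≤ 2*Cinf*(2+Real.log (2*A₀)) := by
        have hs1 : osc * (1+lam) ≤ (2*Cinf/L)*(1+lam) :=
          mul_le_mul_of_nonneg_right hOi (by linarith)
        have hs2 : (2*Cinf/L)*(1+lam) ≤ 2*Cinf*(2+Real.log (2*A₀)) := by
          rw [div_mul_eq_mul_div, div_le_iff₀ (by linarith)]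
          have hkey : 1 + lam ≤ (2+Real.log (2*A₀))*L := by
            have ht : Real.log (2*A₀) ≤ Real.log (2*A₀) * L :=
              le_mul_of_one_le_right hlog2A₀ hL1
            have hrng : (2+Real.log (2*A₀))*L = 2*L + Real.log (2*A₀)*L := by ring
            linarith
          have := mul_le_mul_of_nonneg_left hkey (by linarith : (0:ℝ) ≤ 2*Cinf)
          have hrng2 : 2*Cinf*((2+Real.log (2*A₀))*L) = 2*Cinf*(2+Real.log (2*A₀))*L := by
            ring
          linarith
        linarith
      calc osc * (-Real.log ((μ (qball d x R)).toReal))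
          ≤ osc * (c₁ * (1 + lam + ℓ)) := mul_le_mul_of_nonneg_left hchm hosc0
        _ = c₁ * (osc * (1+lam)) + c₁ * (osc * ℓ) := by ring
        _ ≤ c₁ * (2*Cinf*(2+Real.log (2*A₀))) + c₁ * T₂ := by
            have := mul_le_mul_of_nonneg_left h1lam hc₁0
            have := mul_le_mul_of_nonneg_left hT2 hc₁0
            linarith
        _ ≤ M := by
            rw [hMdef]
            have g1 : 0 ≤ Q*((N₀:ℝ)*Λ + |Real.log m₀|) :=
              mul_nonneg hQ (add_nonneg (mul_nonneg hN₀0 hΛ) (abs_nonneg _))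
            have g3 : 0 ≤ c₁*(Q*(1+Real.log (Real.exp 1+2*A₀))) :=
              mul_nonneg hc₁0 (mul_nonneg hQ (by linarith))
            have hexpand : c₁*(2*Cinf*(2+Real.log (2*A₀)) + Q*(1+Real.log (Real.exp 1+2*A₀)) + T₂)
                = c₁*(2*Cinf*(2+Real.log (2*A₀))) + c₁*(Q*(1+Real.log (Real.exp 1+2*A₀)))
                  + c₁*T₂ := by ring
            linarith
    · push_neg at hfar
      by_cases hR1 : 1 ≤ R
      · -- large ball close to the base point : constant chain length
        have hq2 : A₀*(m+1) ≤ 2^N₀ * R := by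
          have h1 : A₀*(m+1) ≤ A₀*(2*A₀+1)*R := by
            have u1 : A₀*m ≤ A₀*(2*A₀*R) := mul_le_mul_of_nonneg_left hfar.le hA₀pos.le
            have u2 : A₀ ≤ A₀*R := le_mul_of_one_le_right hA₀pos.le hR1
            have e3 : A₀*(2*A₀+1)*R = A₀*(2*A₀*R) + A₀*R := by ring
            have e4 : A₀*(m+1) = A₀*m + A₀ := by ring
            linarith
          have h2 : A₀*(2*A₀+1)*R ≤ 2^N₀ * R :=
            mul_le_mul_of_nonneg_right hN₀ hR.le
          linarith
        have hcc : Real.log m₀ ≤ (N₀:ℝ) * Λ + Real.log ((μ (qball d x R)).toReal) := by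
          rw [hmdef] at hq2; exact chain_core x R N₀ hR hq2
        have hnl : -Real.log ((μ (qball d x R)).toReal) ≤ (N₀:ℝ)*Λ + |Real.log m₀| := by
          have := neg_le_abs (Real.log m₀)
          linarith
        calc osc * (-Real.log ((μ (qball d x R)).toReal))
            ≤ osc * ((N₀:ℝ)*Λ + |Real.log m₀|) := mul_le_mul_of_nonneg_left hnl hosc0
          _ ≤ Q * ((N₀:ℝ)*Λ + |Real.log m₀|) :=
              mul_le_mul_of_nonneg_right hoscQ
                (add_nonneg (mul_nonneg hN₀0 hΛ) (abs_nonneg _))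
          _ ≤ M := by
              rw [hMdef]
              have g2 : 0 ≤ 2*Cinf*(2+Real.log (2*A₀)) := mul_nonneg (by linarith) (by linarith)
              have g3 : 0 ≤ Q*(1+Real.log (Real.exp 1+2*A₀)) :=
                mul_nonneg hQ (by linarith)
              linarith [mul_nonneg hc₁0 (by linarith : (0:ℝ) ≤ 2*Cinf*(2+Real.log (2*A₀)) + Q*(1+Real.log (Real.exp 1+2*A₀)) + T₂)]
      · -- small ball close to the base point
        push_neg at hR1
        have hm2A : m ≤ 2*A₀ := by
          have : 2*A₀*R ≤ 2*A₀ := mul_le_of_le_one_right (by linarith) hR1.le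
          linarith
        have hlamle : lam ≤ Real.log (Real.exp 1 + 2*A₀) := by
          rw [hlamdef]
          exact Real.log_le_log (by positivity) (by linarith)
        have h1lam : osc * (1+lam) ≤ Q*(1+Real.log (Real.exp 1+2*A₀)) :=
          mul_le_mul hoscQ (by linarith) (by linarith) hQ
        calc osc * (-Real.log ((μ (qball d x R)).toReal))
            ≤ osc * (c₁ * (1 + lam + ℓ)) := mul_le_mul_of_nonneg_left hchm hosc0
          _ = c₁ * (osc * (1+lam)) + c₁ * (osc * ℓ) := by ring
          _ ≤ c₁ * (Q*(1+Real.log (Real.exp 1+2*A₀))) + c₁ * T₂ := by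
              have := mul_le_mul_of_nonneg_left h1lam hc₁0
              have := mul_le_mul_of_nonneg_left hT2 hc₁0
              linarith
          _ ≤ M := by
              rw [hMdef]
              have g1 : 0 ≤ Q*((N₀:ℝ)*Λ + |Real.log m₀|) :=
                mul_nonneg hQ (add_nonneg (mul_nonneg hN₀0 hΛ) (abs_nonneg _))
              have g2 : 0 ≤ c₁*(2*Cinf*(2+Real.log (2*A₀))) :=
                mul_nonneg hc₁0 (mul_nonneg (by linarith) (by linarith))
              have hexpand : c₁*(2*Cinf*(2+Real.log (2*A₀)) + Q*(1+Real.log (Real.exp 1+2*A₀)) + T₂)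
                  = c₁*(2*Cinf*(2+Real.log (2*A₀))) + c₁*(Q*(1+Real.log (Real.exp 1+2*A₀)))
                    + c₁*T₂ := by ring
              linarith
  -- final assembly
  refine ⟨Real.exp M, Real.exp_pos M, ?_⟩
  intro x r hr
  have ht0 : 0 < (μ (qball d x r)).toReal :=
    ENNReal.toReal_pos (h_pos x r hr).ne' (h_fin x r hr).ne
  have main : (expSup p (qball d x r) - expInf p (qball d x r))
      * (-Real.log ((μ (qball d x r)).toReal)) ≤ M := by
    have hosc0 : 0 ≤ expSup p (qball d x r) - expInf p (qball d x r) := by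
      have := hinf_le_sup _ (hne x r hr); linarith
    rcases le_or_gt 0 (Real.log ((μ (qball d x r)).toReal)) with hlt | hlt
    · have : (expSup p (qball d x r) - expInf p (qball d x r))
          * (-Real.log ((μ (qball d x r)).toReal)) ≤ 0 :=
        mul_nonpos_of_nonneg_of_nonpos hosc0 (by linarith)
      linarith
    · by_cases hrr₁ : r ≤ r₁
      · obtain ⟨n, hn⟩ := pow_unbounded_of_one_lt (r₁/r) (by norm_num : (1:ℝ) < 4)
        have hge : r₁ ≤ 4^n * r := by
          rw [div_lt_iff₀ hr] at hn
          linarith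
        obtain ⟨R, hrR, hRpos, hμeq, hsub, hdisj⟩ := infl n x r hr hrr₁ hge
        have hoscm := hosc_mono _ _ (hne x r hr) hsub
        have hteq : (μ (qball d x r)).toReal = (μ (qball d x R)).toReal := by rw [hμeq]
        calc (expSup p (qball d x r) - expInf p (qball d x r))
            * (-Real.log ((μ (qball d x r)).toReal))
            ≤ (expSup p (qball d x R) - expInf p (qball d x R))
              * (-Real.log ((μ (qball d x r)).toReal)) :=
              mul_le_mul_of_nonneg_right hoscm (by linarith)
          _ = (expSup p (qball d x R) - expInf p (qball d x R))
              * (-Real.log ((μ (qball d x R)).toReal)) := by rw [hteq]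
          _ ≤ M := est x R hRpos hdisj
      · exact est x r hr (Or.inl (not_le.mp hrr₁))
  have hval : ((μ (qball d x r)).toReal) ^ (expInf p (qball d x r) - expSup p (qball d x r))
      = Real.exp (Real.log ((μ (qball d x r)).toReal)
          * (expInf p (qball d x r) - expSup p (qball d x r))) := by
    rw [Real.rpow_def_of_pos ht0]
  rw [hval]
  apply Real.exp_le_exp.mpr
  calc Real.log ((μ (qball d x r)).toReal) * (expInf p (qball d x r) - expSup p (qball d x r))
      = (expSup p (qball d x r) - expInf p (qball d x r))
        * (-Real.log ((μ (qball d x r)).toReal)) := by ring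
    _ ≤ M := main
end
end

section
/- Under the same hypotheses, if the averaging operators 𝒜_{η,B} are uniformly bounded from L^{p₁(·)}(X,ω₁) × ⋯ × L^{p_m(·)}(X,ω_m) to weak-L^{q(·)}(X,ω) over all balls B, then ω⃗ ∈ A_{p⃗(·),q(·)}(X) and [ω⃗]_{A_{p⃗(·),q(·)}} ≲ sup_B ‖𝒜_{η,B}‖, with implicit constant independent of ω⃗. -/
noncomputable section
open MeasureTheory ENNReal Set

/-- Luxemburg norm on the variable exponent Lebesgue space `L^{p(·)}`. -/
def luxNorm {X : Type*} [MeasurableSpace X] (μ : Measure X) (p : X → ℝ) (f : X → ℝ) : ℝ :=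
  sInf {c : ℝ | 0 < c ∧ ∫⁻ x, (ENNReal.ofReal (|f x| / c)) ^ (p x) ∂μ ≤ 1}

/-- pointwise conjugate exponent -/
def conjExp (t : ℝ) : ℝ := t / (t - 1)

/-- multilinear fractional averaging operator `𝒜_{η,B}` over the ball `B` -/
def fracAvg {X : Type*} [MeasurableSpace X] (μ : Measure X) (η : ℝ) (m : ℕ)
    (B : Set X) (f : Fin m → X → ℝ) (x : X) : ℝ :=
  B.indicator (fun _ =>
    ((μ B).toReal) ^ η * ∏ i, ((μ B).toReal)⁻¹ * ∫ y in B, f i y ∂μ) x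

private lemma luxNorm_nonneg {X : Type*} [MeasurableSpace X] (μ : Measure X)
    (p : X → ℝ) (f : X → ℝ) : 0 ≤ luxNorm μ p f :=
  Real.sInf_nonneg (fun _ hx => hx.1.le)

/-- Key construction: if the `L^{p'(·)}` Luxemburg norm `L` of `ω⁻¹ χ_B` is positive,
there is a nonnegative measurable test function `f` with `‖ω f‖_{L^{p(·)}} ≤ 1` and
`∫_B f = L / 2`. -/
private lemma exists_good_test {X : Type*} [MeasurableSpace X] (μ : Measure X)
    (B : Set X) (hB : μ B ≠ ∞)
    (p : X → ℝ) (hp : ∀ x, 1 < p x)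
    (ω : X → ℝ) (hω : ∀ x, 0 < ω x)
    (hL : 0 < luxNorm μ (fun y => conjExp (p y)) (B.indicator fun y => (ω y)⁻¹)) :
    ∃ f : X → ℝ, (∀ x, 0 ≤ f x) ∧ luxNorm μ p (fun x => ω x * f x) ≤ 1 ∧
      ∫ y in B, f y ∂μ
        = luxNorm μ (fun y => conjExp (p y)) (B.indicator fun y => (ω y)⁻¹) / 2 := by
  set p' : X → ℝ := fun y => conjExp (p y) with hp'def
  set h : X → ℝ := B.indicator fun y => (ω y)⁻¹ with hhdef
  set L : ℝ := luxNorm μ p' h with hLdef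
  have hp'pos : ∀ x, 0 < p' x := by
    intro x
    have h1 := hp x
    exact div_pos (by linarith) (by linarith)
  have hp'ne : ∀ x, p' x ≠ 0 := fun x => (hp'pos x).ne'
  have hppos : ∀ x, 0 < p x := fun x => lt_trans one_pos (hp x)
  have hsum : ∀ x, 1 / p x + 1 / p' x = 1 := by
    intro x
    have h1 := hp x
    simp only [hp'def, conjExp]
    field_simp
    ring
  have hhnn : ∀ x, 0 ≤ h x := by
    intro x
    exact Set.indicator_nonneg (fun y _ => (inv_pos.mpr (hω y)).le) x
  have hlam2 : 0 < L / 2 := half_pos hL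
  -- the modular at L/2 exceeds 1
  have hmod : 1 < ∫⁻ x, (ENNReal.ofReal (|h x| / (L / 2))) ^ (p' x) ∂μ := by
    by_contra hc
    push_neg at hc
    have hmem : (L / 2) ∈ {c : ℝ | 0 < c ∧
        ∫⁻ x, (ENNReal.ofReal (|h x| / c)) ^ (p' x) ∂μ ≤ 1} := ⟨hlam2, hc⟩
    have hbdd : BddBelow {c : ℝ | 0 < c ∧
        ∫⁻ x, (ENNReal.ofReal (|h x| / c)) ^ (p' x) ∂μ ≤ 1} :=
      ⟨0, fun x hx => hx.1.le⟩
    have : L ≤ L / 2 := csInf_le hbdd hmem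
    linarith
  -- extract a simple function minorant with integral > 1
  set F : X → ℝ≥0∞ := fun x => (ENNReal.ofReal (|h x| / (L / 2))) ^ (p' x) with hFdef
  rw [lintegral_def] at hmod
  obtain ⟨φ, hφ⟩ := lt_iSup_iff.mp hmod
  obtain ⟨hφF, hφ1'⟩ := lt_iSup_iff.mp hφ
  have hφ1 : 1 < ∫⁻ x, φ x ∂μ := by
    rwa [SimpleFunc.lintegral_eq_lintegral]
  set A : ℝ≥0∞ := ∫⁻ x, φ x ∂μ with hAdef
  have hφfin : ∀ x, φ x < ∞ := by
    intro x
    exact lt_of_le_of_lt (hφF x)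
      (ENNReal.rpow_lt_top_of_nonneg (hp'pos x).le ENNReal.ofReal_ne_top)
  -- support of φ is inside B
  have hS₀B : Function.support φ ⊆ B := by
    intro x hx
    by_contra hxB
    apply hx
    have hhx : h x = 0 := Set.indicator_of_notMem hxB _
    have hFx : F x = 0 := by
      simp only [hFdef, hhx, abs_zero, zero_div, ENNReal.ofReal_zero]
      exact ENNReal.zero_rpow_of_pos (hp'pos x)
    exact le_antisymm (hFx ▸ hφF x) zero_le
  -- the restricted integral equals A
  have hrB : ∫⁻ x, φ x ∂(μ.restrict B) = A := by
    refine le_antisymm (lintegral_mono' Measure.restrict_le_self le_rfl) ?_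
    calc A = ∫⁻ x, (Function.support φ).indicator φ x ∂μ := by
            rw [Set.indicator_eq_self.mpr subset_rfl]
      _ = ∫⁻ x in Function.support φ, φ x ∂μ :=
            lintegral_indicator φ.measurableSet_support _
      _ ≤ ∫⁻ x in B, φ x ∂μ :=
            lintegral_mono' (Measure.restrict_mono hS₀B le_rfl) le_rfl
  -- A is finite
  have hAfin : A ≠ ∞ := by
    set C : ℝ≥0∞ := φ.range.sup id with hCdef
    have hCx : ∀ x, φ x ≤ C := fun x => Finset.le_sup (f := id) (φ.mem_range_self x)
    have hCfin : C < ∞ := by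
      rw [hCdef, Finset.sup_lt_iff (by simp : (⊥ : ℝ≥0∞) < ∞)]
      intro a ha
      obtain ⟨x, rfl⟩ := SimpleFunc.mem_range.mp ha
      exact hφfin x
    have hle : A ≤ C * μ B := by
      rw [← hrB]
      calc ∫⁻ x, φ x ∂(μ.restrict B) ≤ ∫⁻ _, C ∂(μ.restrict B) :=
            lintegral_mono (fun x => hCx x)
        _ = C * μ B := by rw [lintegral_const, Measure.restrict_apply_univ]
    exact ne_top_of_le_ne_top (ENNReal.mul_ne_top hCfin.ne hB) hle
  have hA0 : A ≠ 0 := (lt_trans zero_lt_one hφ1).ne'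
  set κ : ℝ := A.toReal with hκdef
  have hκ1 : 1 < κ := by
    have := (ENNReal.toReal_lt_toReal (by simp) hAfin).mpr hφ1
    simpa using this
  have hκpos : 0 < κ := lt_trans one_pos hκ1
  -- the test function
  refine ⟨fun x => (L / 2 / κ) * (φ x).toReal, ?_, ?_, ?_⟩
  · intro x
    positivity
  · -- Luxemburg norm ≤ 1
    have hpt : ∀ x, (ENNReal.ofReal (|ω x * ((L / 2 / κ) * (φ x).toReal)| / 1)) ^ (p x)
        ≤ φ x * (ENNReal.ofReal κ)⁻¹ := by
      intro x
      by_cases hx0 : φ x = 0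
      · simp only [hx0, ENNReal.toReal_zero, mul_zero, abs_zero, zero_div,
          ENNReal.ofReal_zero]
        rw [ENNReal.zero_rpow_of_pos (hppos x)]
        exact zero_le
      · have hxB : x ∈ B := hS₀B hx0
        have hafin : φ x ≠ ∞ := (hφfin x).ne
        have hhx : h x = (ω x)⁻¹ := Set.indicator_of_mem hxB _
        have ha : φ x ≤ (ENNReal.ofReal ((ω x)⁻¹ / (L / 2))) ^ (p' x) := by
          have h0 := hφF x
          simp only [hFdef] at h0
          rwa [hhx, abs_of_nonneg (inv_pos.mpr (hω x)).le] at h0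
        set e : ℝ := 1 / p' x with hedef
        have hepos : 0 < e := one_div_pos.mpr (hp'pos x)
        have haene : φ x ^ e ≠ ∞ :=
          (ENNReal.rpow_lt_top_of_nonneg hepos.le hafin).ne
        have hae0 : φ x ^ e ≠ 0 :=
          (ENNReal.rpow_pos (pos_iff_ne_zero.mpr hx0) hafin).ne'
        have step1 : φ x ^ e ≤ ENNReal.ofReal ((ω x)⁻¹ / (L / 2)) := by
          have h2 := ENNReal.rpow_le_rpow ha hepos.le
          rwa [← ENNReal.rpow_mul, hedef, mul_one_div, div_self (hp'ne x),
            ENNReal.rpow_one] at h2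
        set b : ℝ := (φ x ^ e).toReal with hbdef
        have hb0 : 0 < b := ENNReal.toReal_pos hae0 haene
        have step2 : b ≤ (ω x)⁻¹ / (L / 2) := by
          have := ENNReal.toReal_mono ENNReal.ofReal_ne_top step1
          rwa [ENNReal.toReal_ofReal
            (div_nonneg (inv_pos.mpr (hω x)).le hlam2.le)] at this
        have hLb : (L / 2) * b ≤ (ω x)⁻¹ := by
          rw [div_eq_mul_inv ((ω x)⁻¹)] at step2
          calc (L / 2) * b ≤ (L / 2) * ((ω x)⁻¹ * (L / 2)⁻¹) :=
                mul_le_mul_of_nonneg_left step2 hlam2.le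
            _ = (ω x)⁻¹ := by
                rw [mul_comm ((ω x)⁻¹) ((L / 2)⁻¹), ← mul_assoc,
                  mul_inv_cancel₀ hlam2.ne', one_mul]
        have hωx : ω x ≤ ((L / 2) * b)⁻¹ := by
          rw [← inv_inv (ω x)]
          exact inv_anti₀ (by positivity) hLb
        have hfb : ω x * ((L / 2 / κ) * (φ x).toReal) ≤ (φ x).toReal / b / κ := by
          calc ω x * ((L / 2 / κ) * (φ x).toReal)
              ≤ ((L / 2) * b)⁻¹ * ((L / 2 / κ) * (φ x).toReal) := by
                apply mul_le_mul_of_nonneg_right hωx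
                positivity
            _ = (φ x).toReal / b / κ := by
                field_simp
        have hκofReal : (1 : ℝ≥0∞) ≤ ENNReal.ofReal κ :=
          ENNReal.one_le_ofReal.mpr hκ1.le
        have key : ENNReal.ofReal ((φ x).toReal / b / κ)
            = φ x ^ (1 / p x) / ENNReal.ofReal κ := by
          rw [ENNReal.ofReal_div_of_pos hκpos, ENNReal.ofReal_div_of_pos hb0,
            ENNReal.ofReal_toReal hafin, hbdef, ENNReal.ofReal_toReal haene]
          congr 1
          rw [eq_comm, ENNReal.eq_div_iff hae0 haene,
            ← ENNReal.rpow_add _ _ hx0 hafin, hedef]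
          have hone : 1 / p' x + 1 / p x = 1 := by rw [add_comm]; exact hsum x
          rw [hone, ENNReal.rpow_one]
        calc (ENNReal.ofReal (|ω x * ((L / 2 / κ) * (φ x).toReal)| / 1)) ^ (p x)
            ≤ (ENNReal.ofReal ((φ x).toReal / b / κ)) ^ (p x) := by
              rw [div_one, abs_of_nonneg (mul_nonneg (hω x).le (by positivity))]
              exact ENNReal.rpow_le_rpow (ENNReal.ofReal_le_ofReal hfb) (hppos x).le
          _ = (φ x ^ (1 / p x)) ^ (p x) / (ENNReal.ofReal κ) ^ (p x) := by
              rw [key, ENNReal.div_rpow_of_nonneg _ _ (hppos x).le]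
          _ = φ x / (ENNReal.ofReal κ) ^ (p x) := by
              rw [← ENNReal.rpow_mul, one_div, inv_mul_cancel₀ (hppos x).ne',
                ENNReal.rpow_one]
          _ ≤ φ x / ENNReal.ofReal κ := by
              exact ENNReal.div_le_div_left
                (ENNReal.le_rpow_self_of_one_le hκofReal (hp x).le) _
          _ = φ x * (ENNReal.ofReal κ)⁻¹ := div_eq_mul_inv _ _
    have hmod1 : ∫⁻ x, (ENNReal.ofReal
        (|ω x * ((L / 2 / κ) * (φ x).toReal)| / 1)) ^ (p x) ∂μ ≤ 1 := by
      calc ∫⁻ x, (ENNReal.ofReal (|ω x * ((L / 2 / κ) * (φ x).toReal)| / 1)) ^ (p x) ∂μ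
          ≤ ∫⁻ x, φ x * (ENNReal.ofReal κ)⁻¹ ∂μ := lintegral_mono hpt
        _ = A * (ENNReal.ofReal κ)⁻¹ := lintegral_mul_const _ φ.measurable
        _ = 1 := by
            rw [hκdef, ENNReal.ofReal_toReal hAfin, ENNReal.mul_inv_cancel hA0 hAfin]
    have hbdd : BddBelow {c : ℝ | 0 < c ∧
        ∫⁻ x, (ENNReal.ofReal (|ω x * ((L / 2 / κ) * (φ x).toReal)| / c)) ^ (p x) ∂μ ≤ 1} :=
      ⟨0, fun x hx => hx.1.le⟩
    exact csInf_le hbdd ⟨one_pos, hmod1⟩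
  · -- the integral over B
    have h1 : ∫ y in B, ((φ y).toReal) ∂μ = κ := by
      rw [integral_toReal (φ.measurable.aemeasurable)
        (Filter.Eventually.of_forall (fun x => hφfin x)), hrB]
    rw [MeasureTheory.integral_const_mul, h1]
    field_simp

/-- Necessity: if the averaging operators `𝒜_{η,B}` are uniformly bounded from
`∏ᵢ L^{pᵢ(·)}(X,ωᵢ)` into weak-`L^{q(·)}(X,ω)`, then `ω⃗ ∈ A_{p⃗(·),q(·)}(X)` with
`[ω⃗]_{A_{p⃗(·),q(·)}} ≲ sup_B ‖𝒜_{η,B}‖`, the implicit constant being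
independent of `ω⃗`. -/
theorem fracAvg_weak_bound_implies_multiweight
    {X : Type*} [MeasurableSpace X] (d : X → X → ℝ) (μ : Measure X)
    (m : ℕ) (hm : 0 < m)
    (p : Fin m → X → ℝ) (q : X → ℝ) (η : ℝ)
    (hη0 : 0 ≤ η) (hηm : η < m)
    (hp_lo : ∀ i x, 1 < p i x) (hp_hi : ∃ P : ℝ, ∀ i x, p i x ≤ P)
    (hq : ∀ x, 1 / q x = (∑ i, 1 / p i x) - η) :
    ∃ c : ℝ, 0 < c ∧
      ∀ (ω : Fin m → X → ℝ) (w : X → ℝ) (N : ℝ),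
        (∀ i x, 0 < ω i x) → (∀ x, 0 < w x) → 0 < N →
        -- uniform weak-type bound for `𝒜_{η,B}` with operator norm at most `N`
        (∀ (f : Fin m → X → ℝ) (z : X) (r : ℝ) (t : ℝ), 0 < r → 0 < t →
          t * luxNorm μ q
              ({x | t < fracAvg μ η m (qball d z r) f x}.indicator w)
            ≤ N * ∏ i, luxNorm μ (p i) (fun x => ω i x * f i x)) →
        -- conclusion: `[ω⃗]_{A_{p⃗(·),q(·)}} ≲ N`
        ∀ z r, 0 < r →
          ((μ (qball d z r)).toReal) ^ (η - (m : ℝ)) *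
            luxNorm μ q ((qball d z r).indicator w) *
            ∏ i, luxNorm μ (fun y => conjExp (p i y))
              ((qball d z r).indicator fun y => (ω i y)⁻¹) ≤ c * N := by
  refine ⟨2 ^ (m + 1), by positivity, ?_⟩
  intro ω w N hω hw hN hyp z r hr
  set B : Set X := qball d z r with hBdef
  set M : ℝ := (μ B).toReal with hMdef
  set W : ℝ := luxNorm μ q (B.indicator w) with hWdef
  set L : Fin m → ℝ := fun i =>
    luxNorm μ (fun y => conjExp (p i y)) (B.indicator fun y => (ω i y)⁻¹) with hLdef
  have hWnn : 0 ≤ W := luxNorm_nonneg _ _ _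
  have hLnn : ∀ i, 0 ≤ L i := fun i => luxNorm_nonneg _ _ _
  have hηm' : η - (m : ℝ) ≠ 0 := by
    have : (0 : ℝ) < m := by exact_mod_cast hm
    linarith
  by_cases hM : M = 0
  · rw [hM, Real.zero_rpow hηm', zero_mul, zero_mul]
    positivity
  have hMpos : 0 < M := lt_of_le_of_ne ENNReal.toReal_nonneg (Ne.symm hM)
  have hμBfin : μ B ≠ ∞ := by
    intro hc
    rw [hMdef, hc] at hM
    simp at hM
  by_cases hL0 : ∃ i, L i = 0
  · obtain ⟨i, hi⟩ := hL0
    have : ∏ i, L i = 0 := Finset.prod_eq_zero (Finset.mem_univ i) hi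
    rw [this, mul_zero]
    positivity
  push_neg at hL0
  have hLpos : ∀ i, 0 < L i := fun i => lt_of_le_of_ne (hLnn i) (Ne.symm (hL0 i))
  -- choose test functions
  have hchoice : ∀ i : Fin m, ∃ f : X → ℝ, (∀ x, 0 ≤ f x) ∧
      luxNorm μ (p i) (fun x => ω i x * f x) ≤ 1 ∧
      ∫ y in B, f y ∂μ = L i / 2 := fun i =>
    exists_good_test μ B hμBfin (p i) (hp_lo i) (ω i) (hω i) (hLpos i)
  choose f hfnn hfnorm hfint using hchoice
  set V : ℝ := M ^ η * ∏ i, M⁻¹ * (L i / 2) with hVdef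
  have hVpos : 0 < V := by
    apply mul_pos (Real.rpow_pos_of_pos hMpos _)
    apply Finset.prod_pos
    intro i _
    exact mul_pos (inv_pos.mpr hMpos) (half_pos (hLpos i))
  -- evaluate the averaging operator
  have hfr : ∀ x, fracAvg μ η m B f x = B.indicator (fun _ => V) x := by
    intro x
    unfold fracAvg
    have : (fun (_ : X) => ((μ B).toReal) ^ η *
        ∏ i, ((μ B).toReal)⁻¹ * ∫ y in B, f i y ∂μ) = fun _ => V := by
      funext _
      rw [hVdef, ← hMdef]
      congr 1
      exact Finset.prod_congr rfl (fun i _ => by rw [hfint i])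
    rw [this]
  have hset : {x | V / 2 < fracAvg μ η m B f x} = B := by
    ext x
    simp only [Set.mem_setOf_eq, hfr x]
    by_cases hx : x ∈ B
    · simp only [Set.indicator_of_mem hx, hx, iff_true]
      linarith
    · simp only [Set.indicator_of_notMem hx, hx, iff_false, not_lt]
      exact (half_pos hVpos).le
  have key := hyp f z r (V / 2) hr (half_pos hVpos)
  rw [← hBdef, hset] at key
  have hPROD : ∏ i, luxNorm μ (p i) (fun x => ω i x * f i x) ≤ 1 :=
    Finset.prod_le_one (fun i _ => luxNorm_nonneg _ _ _) (fun i _ => hfnorm i)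
  have h2 : V / 2 * W ≤ N := by
    calc V / 2 * W ≤ N * ∏ i, luxNorm μ (p i) (fun x => ω i x * f i x) := key
      _ ≤ N * 1 := mul_le_mul_of_nonneg_left hPROD hN.le
      _ = N := mul_one N
  -- algebraic wrap-up
  have hMe : M ^ (η - (m : ℝ)) = M ^ η * (M⁻¹) ^ m := by
    rw [Real.rpow_sub hMpos, Real.rpow_natCast, inv_pow, div_eq_mul_inv]
  have hVeq : V * 2 ^ m = M ^ η * (M⁻¹) ^ m * ∏ i, L i := by
    rw [hVdef, Finset.prod_mul_distrib, Finset.prod_const, Finset.card_univ,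
      Fintype.card_fin]
    have : ∏ i : Fin m, (L i / 2) = (∏ i, L i) / 2 ^ m := by
      rw [Finset.prod_div_distrib, Finset.prod_const, Finset.card_univ,
        Fintype.card_fin]
    rw [this]
    have h2m : (2 : ℝ) ^ m ≠ 0 := by positivity
    field_simp
  calc M ^ (η - (m : ℝ)) * W * ∏ i, L i
      = (M ^ η * (M⁻¹) ^ m * ∏ i, L i) * W := by rw [hMe]; ring
    _ = (V * 2 ^ m) * W := by rw [hVeq]
    _ = 2 ^ m * 2 * (V / 2 * W) := by ring
    _ ≤ 2 ^ m * 2 * N := by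
        apply mul_le_mul_of_nonneg_left h2
        positivity
    _ = 2 ^ (m + 1) * N := by ring
end
end

section
/- In the setting of the multilinear dyadic Calderón–Zygmund decomposition: let {Q_j^k} be the CZ cubes at heights a^k for k ∈ ℤ, where a > C_{CZ}, and set E_j^k := Q_j^k \ {ℳ_{η,𝚟}^𝒟(f⃗) > a^{k+1}}. Then the sets E_j^k are pairwise disjoint over all j, k, and (1 − (C_{CZ}/a)^{1/(m−η)}) 𝚟(Q_j^k) ≤ 𝚟(E_j^k) ≤ 𝚟(Q_j^k). -/
noncomputable section
open MeasureTheory ENNReal Set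

/-- the measure `v dμ` of a set -/
def wInt {X : Type*} [MeasurableSpace X] (μ : Measure X) (w : X → ℝ) (E : Set X) : ℝ≥0∞ :=
  ∫⁻ x in E, ENNReal.ofReal (w x) ∂μ

/-- the quantity `v(Q)^{η−m} ∏ᵢ ∫_Q |fᵢ| v dμ` -/
def czQty {X : Type*} [MeasurableSpace X] (μ : Measure X) (v : X → ℝ) (η : ℝ)
    (m : ℕ) (f : Fin m → X → ℝ) (Q : Set X) : ℝ≥0∞ :=
  (wInt μ v Q) ^ (η - (m : ℝ)) * ∏ i, ∫⁻ y in Q, ENNReal.ofReal (|f i y| * v y) ∂μ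

/-- multilinear weighted dyadic fractional maximal operator `ℳ_{η,v}^𝒟` -/
def MMD {X : Type*} [MeasurableSpace X] (𝒟 : Set (Set X)) (μ : Measure X)
    (v : X → ℝ) (η : ℝ) (m : ℕ) (f : Fin m → X → ℝ) (x : X) : ℝ≥0∞ :=
  ⨆ (Q : Set X) (_ : Q ∈ 𝒟) (_ : x ∈ Q), czQty μ v η m f Q

/-- Disjointness and measure comparison for the Calderón–Zygmund exceptional sets:
if `{Q_j^k}` are the CZ cubes at heights `a^k` (`a > C_{CZ}`) and
`E_j^k = Q_j^k \ {ℳ_{η,v}^𝒟(f⃗) > a^{k+1}}`, then the `E_j^k` are pairwise disjoint and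
`(1 − (C_{CZ}/a)^{1/(m−η)}) v(Q_j^k) ≤ v(E_j^k) ≤ v(Q_j^k)`. -/
theorem CZ_exceptional_sets
    {X : Type*} [MeasurableSpace X] (𝒟 : Set (Set X)) (μ : Measure X)
    (hmeas : ∀ Q ∈ 𝒟, MeasurableSet Q)
    (hnested : ∀ Q₁ ∈ 𝒟, ∀ Q₂ ∈ 𝒟, Q₁ ∩ Q₂ = ∅ ∨ Q₁ ⊆ Q₂ ∨ Q₂ ⊆ Q₁)
    (m : ℕ) (hm : 0 < m) (η : ℝ) (hη0 : 0 ≤ η) (hηm : η < m)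
    (v : X → ℝ) (hv : ∀ x, 0 < v x)
    (f : Fin m → X → ℝ)
    (a CCZ : ℝ) (hCCZ : 1 < CCZ) (ha : CCZ < a)
    -- CZ cubes at heights `a^k`
    (Q : ℤ → ℕ → Set X)
    (hQmem : ∀ k j, Q k j ≠ ∅ → Q k j ∈ 𝒟)
    (hQdisj : ∀ k, ∀ j j' : ℕ, j ≠ j' → Disjoint (Q k j) (Q k j'))
    (hQcover : ∀ k : ℤ,
      {x | ENNReal.ofReal (a ^ k) < MMD 𝒟 μ v η m f x} = ⋃ j, Q k j)
    (hQbounds : ∀ k j, Q k j ≠ ∅ →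
      ENNReal.ofReal (a ^ k) < czQty μ v η m f (Q k j) ∧
        czQty μ v η m f (Q k j) ≤ ENNReal.ofReal (CCZ * a ^ k))
    (hQnest : ∀ k j, Q (k + 1) j ≠ ∅ → ∃ j', Q (k + 1) j ⊆ Q k j') :
    -- the exceptional sets `E_j^k = Q_j^k \ X_{k+1}`
    (∀ k j k' j', (k, j) ≠ (k', j') →
      Disjoint
        (Q k j \ {x | ENNReal.ofReal (a ^ (k + 1)) < MMD 𝒟 μ v η m f x})
        (Q k' j' \ {x | ENNReal.ofReal (a ^ (k' + 1)) < MMD 𝒟 μ v η m f x}))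
    ∧
    (∀ k j,
      ENNReal.ofReal (1 - (CCZ / a) ^ (1 / ((m : ℝ) - η))) * wInt μ v (Q k j)
          ≤ wInt μ v (Q k j \ {x | ENNReal.ofReal (a ^ (k + 1)) < MMD 𝒟 μ v η m f x}) ∧
        wInt μ v (Q k j \ {x | ENNReal.ofReal (a ^ (k + 1)) < MMD 𝒟 μ v η m f x})
          ≤ wInt μ v (Q k j)) := by
  have ha1 : (1:ℝ) < a := hCCZ.trans ha
  have ha0 : (0:ℝ) < a := lt_trans one_pos ha1
  have hC0 : (0:ℝ) < CCZ := lt_trans one_pos hCCZ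
  have hmr : (0:ℝ) < (m:ℝ) - η := by linarith
  set β : ℝ := 1 / ((m:ℝ) - η) with hβ
  have hβ0 : 0 < β := by rw [hβ]; positivity
  have hβm : 1 / (m:ℝ) ≤ β := by
    rw [hβ]; apply one_div_le_one_div_of_le hmr; linarith
  have hmβ : ((m:ℝ) - η) * β = 1 := by rw [hβ]; field_simp
  set r : ℝ := (CCZ / a) ^ β with hr
  have hca0 : 0 < CCZ / a := div_pos hC0 ha0
  have hca1 : CCZ / a < 1 := (div_lt_one ha0).mpr ha
  have hr0 : 0 < r := Real.rpow_pos_of_pos hca0 β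
  have hr1 : r < 1 := Real.rpow_lt_one hca0.le hca1 hβ0
  -- basic positivity/finiteness facts for a CZ cube
  have basic : ∀ (S : Set X) (b c : ℝ), 0 < b →
      ENNReal.ofReal b < czQty μ v η m f S → czQty μ v η m f S ≤ ENNReal.ofReal c →
      wInt μ v S ≠ 0 ∧ wInt μ v S ≠ ∞ ∧
      (∀ i, (∫⁻ y in S, ENNReal.ofReal (|f i y| * v y) ∂μ) ≠ 0) ∧
      (∀ i, (∫⁻ y in S, ENNReal.ofReal (|f i y| * v y) ∂μ) ≠ ∞) := by
    intro S b c hb hlow hup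
    set A := wInt μ v S with hA
    set Pd := ∏ i, ∫⁻ y in S, ENNReal.ofReal (|f i y| * v y) ∂μ with hPd
    have hpos : 0 < A ^ (η - (m:ℝ)) * Pd := lt_of_le_of_lt zero_le hlow
    have hfin : A ^ (η - (m:ℝ)) * Pd ≠ ∞ :=
      ne_top_of_le_ne_top ENNReal.ofReal_ne_top hup
    have hrest0 : A ^ (η - (m:ℝ)) ≠ 0 ∧ Pd ≠ 0 := by
      constructor <;> intro h <;> simp [h, czQty] at hpos
    have hAtop : A ≠ ∞ := by
      intro h
      rw [h, ENNReal.top_rpow_of_neg (by linarith)] at hpos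
      simp at hpos
    have hA0 : A ≠ 0 := by
      intro h
      rw [h, ENNReal.zero_rpow_of_neg (by linarith)] at hfin
      rw [ENNReal.top_mul hrest0.2] at hfin
      exact hfin rfl
    have hPdtop : Pd ≠ ∞ := by
      intro h
      rw [h, ENNReal.mul_top hrest0.1] at hfin
      exact hfin rfl
    have hY0 : ∀ i, (∫⁻ y in S, ENNReal.ofReal (|f i y| * v y) ∂μ) ≠ 0 := by
      intro i
      exact Finset.prod_ne_zero_iff.mp hrest0.2 i (Finset.mem_univ i)
    refine ⟨hA0, hAtop, hY0, ?_⟩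
    intro i hi
    apply hPdtop
    rw [hPd, ← Finset.mul_prod_erase _ _ (Finset.mem_univ i), hi]
    rw [ENNReal.top_mul]
    exact Finset.prod_ne_zero_iff.mpr fun j _ => hY0 j
  constructor
  · -- disjointness
    have disjAux : ∀ (k k' : ℤ) (j j' : ℕ), k < k' →
        Disjoint (Q k j \ {x | ENNReal.ofReal (a ^ (k + 1)) < MMD 𝒟 μ v η m f x})
          (Q k' j' \ {x | ENNReal.ofReal (a ^ (k' + 1)) < MMD 𝒟 μ v η m f x}) := by
      intro k k' j j' hkk'
      rw [Set.disjoint_left]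
      intro x hx hx'
      have hx1 : x ∈ ⋃ j'', Q k' j'' := Set.mem_iUnion.mpr ⟨j', hx'.1⟩
      rw [← hQcover k'] at hx1
      have hle : ENNReal.ofReal (a ^ (k + 1)) ≤ ENNReal.ofReal (a ^ k') :=
        ENNReal.ofReal_le_ofReal (zpow_le_zpow_right₀ ha1.le (by omega))
      exact hx.2 (lt_of_le_of_lt hle hx1)
    intro k j k' j' hne
    rcases lt_trichotomy k k' with h | h | h
    · exact disjAux k k' j j' h
    · subst h
      have hjj : j ≠ j' := by
        intro h; exact hne (by rw [h])
      exact (hQdisj k j j' hjj).mono diff_subset diff_subset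
    · exact (disjAux k' k j' j h).symm
  · -- measure bounds
    intro k j
    by_cases hne : Q k j = ∅
    · simp [hne, wInt]
    -- notation
    set P := Q k j with hP
    set Xk : Set X := {x | ENNReal.ofReal (a ^ (k + 1)) < MMD 𝒟 μ v η m f x} with hXk
    set A := wInt μ v P with hA
    set Y : Fin m → ℝ≥0∞ := fun i => ∫⁻ y in P, ENNReal.ofReal (|f i y| * v y) ∂μ with hY
    refine ⟨?_, lintegral_mono_set diff_subset⟩
    obtain ⟨hlowP, hupP⟩ := hQbounds k j hne
    obtain ⟨hA0, hAtop, hY0, hYtop⟩ :=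
      basic P (a ^ k) (CCZ * a ^ k) (zpow_pos ha0 k) hlowP hupP
    have hPmeas : MeasurableSet P := hmeas _ (hQmem k j hne)
    have hak1 : (0:ℝ) < a ^ (k+1) := zpow_pos ha0 (k+1)
    -- product bound at level k
    have hprodY : ∏ i, Y i ≤ ENNReal.ofReal (CCZ * a ^ k) * A ^ ((m:ℝ) - η) := by
      have h1 : ∏ i, Y i = A ^ ((m:ℝ) - η) * (A ^ (η - (m:ℝ)) * ∏ i, Y i) := by
        rw [← mul_assoc, ← ENNReal.rpow_add _ _ hA0 hAtop]
        norm_num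
      rw [h1]
      calc A ^ ((m:ℝ) - η) * (A ^ (η - (m:ℝ)) * ∏ i, Y i)
          ≤ A ^ ((m:ℝ) - η) * ENNReal.ofReal (CCZ * a ^ k) := by
            exact mul_le_mul_right hupP _
        _ = ENNReal.ofReal (CCZ * a ^ k) * A ^ ((m:ℝ) - η) := mul_comm _ _
    -- per-cube bound
    have hj : ∀ j' : ℕ, wInt μ v (P ∩ Q (k+1) j') ≤
        ENNReal.ofReal r * A *
          ∏ i, ((∫⁻ y in P ∩ Q (k+1) j', ENNReal.ofReal (|f i y| * v y) ∂μ) / Y i)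
            ^ ((1:ℝ) / m) := by
      intro j'
      by_cases hPQ : P ∩ Q (k+1) j' = ∅
      · rw [hPQ]; simp [wInt]
      have hne' : Q (k+1) j' ≠ ∅ := by
        intro h; apply hPQ; rw [h, Set.inter_empty]
      -- the cube at level k+1 is contained in P
      have hsub : Q (k+1) j' ⊆ P := by
        obtain ⟨j'', hsub'⟩ := hQnest k j' hne'
        by_cases hjj : j'' = j
        · rwa [hjj] at hsub'
        · exfalso
          apply hPQ
          have hd : Disjoint P (Q k j'') := hQdisj k j j'' (Ne.symm hjj)
          have : P ∩ Q (k+1) j' ⊆ P ∩ Q k j'' := Set.inter_subset_inter_right _ hsub'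
          rw [Set.disjoint_iff_inter_eq_empty.mp hd] at this
          exact Set.eq_empty_iff_forall_notMem.mpr fun x hx => (this hx).elim
      rw [Set.inter_eq_self_of_subset_right hsub]
      set B := wInt μ v (Q (k+1) j') with hB
      set y : Fin m → ℝ≥0∞ :=
        fun i => ∫⁻ z in Q (k+1) j', ENNReal.ofReal (|f i z| * v z) ∂μ with hy
      obtain ⟨hlow', hup'⟩ := hQbounds (k+1) j' hne'
      obtain ⟨hB0, hBtop, hy0, hytop⟩ :=
        basic (Q (k+1) j') (a ^ (k+1)) (CCZ * a ^ (k+1)) hak1 hlow' hup'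
      set T := ∏ i, (y i / Y i) with hT
      have hyY : ∀ i, y i ≤ Y i := fun i => lintegral_mono_set hsub
      have hT1 : T ≤ 1 := Finset.prod_le_one (fun _ _ => zero_le)
        (fun i _ => ENNReal.div_le_of_le_mul (by rw [one_mul]; exact hyY i))
      have hprody : ∏ i, y i = (∏ i, Y i) * T := by
        rw [hT, ← Finset.prod_mul_distrib]
        exact Finset.prod_congr rfl fun i _ =>
          (ENNReal.mul_div_cancel (hY0 i) (hYtop i)).symm
      -- B^(m-η) ≤ (ofReal (a^(k+1)))⁻¹ * ∏ y
      have hBpow : B ^ ((m:ℝ) - η) ≤ (ENNReal.ofReal (a ^ (k+1)))⁻¹ * ∏ i, y i := by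
        have hcancel : B ^ (η - (m:ℝ)) * B ^ ((m:ℝ) - η) = 1 := by
          rw [← ENNReal.rpow_add _ _ hB0 hBtop]; norm_num
        have h1 : (ENNReal.ofReal (a ^ (k+1)))⁻¹ * ENNReal.ofReal (a ^ (k+1)) = 1 :=
          ENNReal.inv_mul_cancel (by simp [hak1]) ENNReal.ofReal_ne_top
        calc B ^ ((m:ℝ) - η)
            = (ENNReal.ofReal (a ^ (k+1)))⁻¹ * ENNReal.ofReal (a ^ (k+1))
              * B ^ ((m:ℝ) - η) := by rw [h1, one_mul]
          _ ≤ (ENNReal.ofReal (a ^ (k+1)))⁻¹ * (B ^ (η - (m:ℝ)) * ∏ i, y i)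
              * B ^ ((m:ℝ) - η) := by
              exact mul_le_mul_left (mul_le_mul_right hlow'.le _) _
          _ = (ENNReal.ofReal (a ^ (k+1)))⁻¹ * (∏ i, y i)
              * (B ^ (η - (m:ℝ)) * B ^ ((m:ℝ) - η)) := by ring
          _ = (ENNReal.ofReal (a ^ (k+1)))⁻¹ * ∏ i, y i := by rw [hcancel, mul_one]
      -- raise to power β
      have hBle : B ≤ ((ENNReal.ofReal (a ^ (k+1)))⁻¹ * ∏ i, y i) ^ β := by
        have hBeq : B = (B ^ ((m:ℝ) - η)) ^ β := by
          rw [← ENNReal.rpow_mul, hmβ, ENNReal.rpow_one]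
        rw [hBeq]
        exact ENNReal.rpow_le_rpow hBpow hβ0.le
      -- expand and estimate
      have hconst : ((ENNReal.ofReal (a ^ (k+1)))⁻¹ * ENNReal.ofReal (CCZ * a ^ k)) ^ β
          = ENNReal.ofReal r := by
        rw [mul_comm, ← div_eq_mul_inv, ← ENNReal.ofReal_div_of_pos hak1]
        have : CCZ * a ^ k / a ^ (k+1) = CCZ / a := by
          rw [zpow_add_one₀ (ne_of_gt ha0)]
          field_simp
        rw [this, ← ENNReal.ofReal_rpow_of_pos hca0]
      calc B ≤ ((ENNReal.ofReal (a ^ (k+1)))⁻¹ * ∏ i, y i) ^ β := hBle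
        _ = ((ENNReal.ofReal (a ^ (k+1)))⁻¹ * ((∏ i, Y i) * T)) ^ β := by rw [hprody]
        _ ≤ ((ENNReal.ofReal (a ^ (k+1)))⁻¹ *
              ((ENNReal.ofReal (CCZ * a ^ k) * A ^ ((m:ℝ) - η)) * T)) ^ β := by
            apply ENNReal.rpow_le_rpow _ hβ0.le
            exact mul_le_mul_right (mul_le_mul_left hprodY _) _
        _ = ((ENNReal.ofReal (a ^ (k+1)))⁻¹ * ENNReal.ofReal (CCZ * a ^ k)) ^ β
              * (A ^ ((m:ℝ) - η)) ^ β * T ^ β := by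
            rw [show (ENNReal.ofReal (a ^ (k+1)))⁻¹ *
                ((ENNReal.ofReal (CCZ * a ^ k) * A ^ ((m:ℝ) - η)) * T)
                = ((ENNReal.ofReal (a ^ (k+1)))⁻¹ * ENNReal.ofReal (CCZ * a ^ k))
                  * (A ^ ((m:ℝ) - η)) * T by ring]
            rw [ENNReal.mul_rpow_of_nonneg _ _ hβ0.le, ENNReal.mul_rpow_of_nonneg _ _ hβ0.le]
        _ ≤ ENNReal.ofReal r * A * T ^ ((1:ℝ)/m) := by
            rw [hconst, ← ENNReal.rpow_mul, hmβ, ENNReal.rpow_one]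
            exact mul_le_mul_right (ENNReal.rpow_le_rpow_of_exponent_ge hT1 hβm) _
        _ = ENNReal.ofReal r * A * ∏ i, (y i / Y i) ^ ((1:ℝ)/m) := by
            rw [hT, ← ENNReal.prod_rpow_of_nonneg (by positivity)]
    -- summing up
    have hXcover : P ∩ Xk = ⋃ j', P ∩ Q (k+1) j' := by
      rw [hXk, hQcover (k+1), Set.inter_iUnion]
    have hsum : wInt μ v (P ∩ Xk) ≤ ENNReal.ofReal r * A := by
      have h1 : wInt μ v (P ∩ Xk) ≤ ∑' j', wInt μ v (P ∩ Q (k+1) j') := by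
        rw [wInt, hXcover]
        exact lintegral_iUnion_le _ _
      have h2 : ∑' j', wInt μ v (P ∩ Q (k+1) j') ≤
          ENNReal.ofReal r * A * ∑' j',
            ∏ i, ((∫⁻ z in P ∩ Q (k+1) j', ENNReal.ofReal (|f i z| * v z) ∂μ) / Y i)
              ^ ((1:ℝ)/m) := by
        rw [← ENNReal.tsum_mul_left]
        exact ENNReal.tsum_le_tsum hj
      have h3 : (∑' j' : ℕ,
          ∏ i, ((∫⁻ z in P ∩ Q (k+1) j', ENNReal.ofReal (|f i z| * v z) ∂μ) / Y i)
            ^ ((1:ℝ)/m)) ≤ 1 := by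
        set g : Fin m → ℕ → ℝ≥0∞ :=
          fun i j' => (∫⁻ z in P ∩ Q (k+1) j', ENNReal.ofReal (|f i z| * v z) ∂μ) / Y i
          with hg
        have hmsets : ∀ j' : ℕ, MeasurableSet (P ∩ Q (k+1) j') := by
          intro j'
          by_cases h : Q (k+1) j' = ∅
          · rw [h, Set.inter_empty]; exact MeasurableSet.empty
          · exact hPmeas.inter (hmeas _ (hQmem (k+1) j' h))
        have hdisj : Pairwise (Function.onFun Disjoint fun j' => P ∩ Q (k+1) j') :=
          fun j1 j2 hj12 => (hQdisj (k+1) j1 j2 hj12).mono inf_le_right inf_le_right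
        have hgsum : ∀ i, ∑' j', g i j' ≤ 1 := by
          intro i
          rw [hg]
          simp only [div_eq_mul_inv]
          rw [ENNReal.tsum_mul_right]
          apply ENNReal.div_le_of_le_mul
          rw [one_mul, ← lintegral_iUnion hmsets hdisj]
          exact lintegral_mono_set (Set.iUnion_subset fun j' => Set.inter_subset_left)
        calc (∑' j' : ℕ, ∏ i, g i j' ^ ((1:ℝ)/m))
            = ∫⁻ j', ∏ i, g i j' ^ ((1:ℝ)/m) ∂(Measure.count) := (lintegral_count _).symm
          _ ≤ ∏ i, (∫⁻ j', g i j' ∂(Measure.count)) ^ ((1:ℝ)/m) := by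
              apply ENNReal.lintegral_prod_norm_pow_le
              · exact fun i _ => (measurable_of_countable _).aemeasurable
              · simp [Finset.sum_const]
                field_simp
              · exact fun i _ => by positivity
          _ ≤ ∏ i, (1:ℝ≥0∞) ^ ((1:ℝ)/m) := by
              apply Finset.prod_le_prod' ?_
              intro i _
              apply ENNReal.rpow_le_rpow _ (by positivity)
              rw [lintegral_count]
              exact hgsum i
          _ = 1 := by simp
      calc wInt μ v (P ∩ Xk) ≤ ENNReal.ofReal r * A * ∑' j',
            ∏ i, ((∫⁻ z in P ∩ Q (k+1) j', ENNReal.ofReal (|f i z| * v z) ∂μ) / Y i)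
              ^ ((1:ℝ)/m) := h1.trans h2
        _ ≤ ENNReal.ofReal r * A * 1 := mul_le_mul_right h3 _
        _ = ENNReal.ofReal r * A := mul_one _
    -- final assembly
    have hsplit : A ≤ wInt μ v (P ∩ Xk) + wInt μ v (P \ Xk) := by
      rw [hA, wInt]
      calc ∫⁻ x in P, ENNReal.ofReal (v x) ∂μ
          = ∫⁻ x in (P ∩ Xk) ∪ (P \ Xk), ENNReal.ofReal (v x) ∂μ := by
            rw [Set.inter_union_diff]
        _ ≤ _ := lintegral_union_le _ _ _
    have hfin : ENNReal.ofReal r * A ≠ ∞ := ENNReal.mul_ne_top ENNReal.ofReal_ne_top hAtop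
    have hkey : ENNReal.ofReal (1 - r) * A + ENNReal.ofReal r * A
        ≤ wInt μ v (P \ Xk) + ENNReal.ofReal r * A := by
      have h1 : ENNReal.ofReal (1 - r) * A + ENNReal.ofReal r * A = A := by
        rw [← add_mul, ← ENNReal.ofReal_add (by linarith) hr0.le]
        norm_num
      rw [h1]
      calc A ≤ wInt μ v (P ∩ Xk) + wInt μ v (P \ Xk) := hsplit
        _ ≤ ENNReal.ofReal r * A + wInt μ v (P \ Xk) := add_le_add_left hsum _
        _ = wInt μ v (P \ Xk) + ENNReal.ofReal r * A := add_comm _ _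
    exact (ENNReal.add_le_add_iff_right hfin).mp hkey
end
end
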